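/- Let $\mathcal{O}$ be an imaginary quadratic order, $N \geq 1$, and suppose the triple $(\mathcal{O}, \eta, [\mathfrak{a}])$ (with $\eta$ an invertible ideal of norm $N$ with $\mathcal{O}/\eta$ cyclic, and $[\mathfrak{a}] \in \mathrm{Pic}(\mathcal{O})$) defines a Heegner point on $X_0(N)$ whose image in $X_0(N)^* = X_0(N)/\mathcal{W}(N)$ is a rational point. Then $\mathrm{Pic}(\mathcal{O})$ is an elementary abelian 2-group of order dividing $2^{\omega(N)}$, where $\omega(N)$ is the number of distinct prime factors of $N$. -/

import Mathlib

open Polynomial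
open scoped Classical

/-- The minimal polynomial of the canonical generator of the quadratic order of
discriminant `D` (`D ≡ 0, 1 mod 4`): `X² - D/4` if `4 ∣ D`, else `X² - X + (1-D)/4`. -/
noncomputable def discPoly (D : ℤ) : Polynomial ℤ :=
  if 4 ∣ D then X ^ 2 - C (D / 4) else X ^ 2 - X + C ((1 - D) / 4)

/-- The quadratic order of discriminant `D`. -/
noncomputable abbrev QOrd (D : ℤ) := AdjoinRoot (discPoly D)

/-- `Q` is a Hall divisor of `N`: `Q ∣ N` with `gcd(Q, N/Q) = 1`. -/
def HallDvd (Q N : ℕ) : Prop := Q ∣ N ∧ Nat.Coprime Q (N / Q)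

/-- The norm-`Q` part `η_Q = η + Q·𝒪` of an ideal `η` whose quotient is cyclic of order
`N`, for `Q` a Hall divisor of `N`. -/
noncomputable def etaPart {D : ℤ} (η : Ideal (QOrd D)) (Q : ℕ) : Ideal (QOrd D) :=
  η ⊔ Ideal.span {(Q : QOrd D)}

/-- The class of an invertible ideal in the Picard (class) group of the order. -/
noncomputable def idealClassOf {D : ℤ} [IsDomain (QOrd D)] (I : Ideal (QOrd D)) :
    ClassGroup (QOrd D) :=
  if h : IsUnit (I : FractionalIdeal (nonZeroDivisors (QOrd D)) (FractionRing (QOrd D)))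
  then ClassGroup.mk (FractionRing (QOrd D)) h.unit else 1

namespace HAux

def sD (D : ℤ) : ℤ := if 4 ∣ D then 0 else 1
def cD (D : ℤ) : ℤ := if 4 ∣ D then -(D/4) else (1-D)/4

lemma discPoly_eq (D : ℤ) : discPoly D = C 1 * X^2 + C (-(sD D)) * X + C (cD D) := by
  unfold discPoly sD cD
  split <;> simp [C_neg] <;> ring

lemma discPoly_natDegree (D : ℤ) : (discPoly D).natDegree = 2 := by
  rw [discPoly_eq]; exact natDegree_quadratic one_ne_zero

lemma discPoly_monic (D : ℤ) : (discPoly D).Monic := by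
  unfold discPoly
  split
  · exact monic_X_pow_sub (degree_C_le.trans_lt (by norm_num))
  · have h : (X^2 - X + C ((1-D)/4) : ℤ[X]) = X^2 - (X - C ((1-D)/4)) := by ring
    rw [h]
    refine monic_X_pow_sub (lt_of_le_of_lt (degree_sub_le _ _) ?_)
    rw [degree_X]
    refine max_lt (by norm_num) (degree_C_le.trans_lt (by norm_num))

variable {D : ℤ}

noncomputable def pb (D : ℤ) : PowerBasis ℤ (QOrd D) := AdjoinRoot.powerBasis' (discPoly_monic D)

lemma of_intCast (z : ℤ) : (AdjoinRoot.of (discPoly D)) z = (z : QOrd D) := by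
  rw [← AdjoinRoot.algebraMap_eq]; simp

lemma root_sq : (AdjoinRoot.root (discPoly D))^2
    = (sD D : QOrd D) * AdjoinRoot.root (discPoly D) - (cD D : QOrd D) := by
  have h : AdjoinRoot.mk (discPoly D) (C 1 * X^2 + C (-(sD D)) * X + C (cD D)) = 0 := by
    rw [← discPoly_eq]; exact AdjoinRoot.mk_self
  rw [map_add, map_add, map_mul, map_mul, map_pow, AdjoinRoot.mk_C, AdjoinRoot.mk_C,
    AdjoinRoot.mk_C, AdjoinRoot.mk_X, of_intCast, of_intCast, of_intCast] at h
  push_cast at h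
  linear_combination h

lemma coords (x : QOrd D) : ∃ a b : ℤ,
    x = (a : QOrd D) + (b : QOrd D) * AdjoinRoot.root (discPoly D) := by
  obtain ⟨P, rfl⟩ := AdjoinRoot.mk_surjective (g := discPoly D) x
  set r := P %ₘ (discPoly D) with hr
  have hdeg : r.degree ≤ 1 := by
    have h2 := degree_modByMonic_lt P (discPoly_monic D)
    have h3 : (discPoly D).degree = 2 := by
      rw [degree_eq_natDegree (discPoly_monic D).ne_zero, discPoly_natDegree D]; rfl
    rw [h3] at h2
    exact Order.le_of_lt_succ (by exact_mod_cast h2)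
  refine ⟨r.coeff 0, r.coeff 1, ?_⟩
  have hPr : AdjoinRoot.mk (discPoly D) P = AdjoinRoot.mk (discPoly D) r := by
    conv_lhs => rw [← modByMonic_add_div P (discPoly D)]
    rw [map_add, map_mul, AdjoinRoot.mk_self]
    simp [hr]
  rw [hPr]
  conv_lhs => rw [eq_X_add_C_of_degree_le_one hdeg]
  rw [map_add, map_mul, AdjoinRoot.mk_C, AdjoinRoot.mk_C, AdjoinRoot.mk_X]
  rw [of_intCast, of_intCast]; ring

lemma linIndep {a b : ℤ} (h : (a : QOrd D) + (b : QOrd D) * AdjoinRoot.root (discPoly D) = 0) :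
    a = 0 ∧ b = 0 := by
  have hdim : (pb D).dim = 2 := by
    rw [pb, AdjoinRoot.powerBasis'_dim, discPoly_natDegree]
  set i0 : Fin (pb D).dim := ⟨0, by omega⟩
  set i1 : Fin (pb D).dim := ⟨1, by omega⟩
  have hb0 : (pb D).basis i0 = 1 := by
    rw [PowerBasis.coe_basis]; simp [i0]
  have hb1 : (pb D).basis i1 = AdjoinRoot.root (discPoly D) := by
    rw [PowerBasis.coe_basis]; simp [i1, pb, AdjoinRoot.powerBasis'_gen]
  have hx : a • (pb D).basis i0 + b • (pb D).basis i1 = 0 := by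
    rw [hb0, hb1]
    rw [zsmul_eq_mul, zsmul_eq_mul]
    push_cast
    linear_combination h
  have hr := congrArg ((pb D).basis.repr) hx
  rw [map_add, map_zsmul, map_zsmul, Module.Basis.repr_self, Module.Basis.repr_self, map_zero] at hr
  have h01 : i0 ≠ i1 := by simp [i0, i1, Fin.ext_iff]
  constructor
  · have := congrArg (fun f => f i0) hr
    simpa [Finsupp.single_apply, h01, h01.symm] using this
  · have := congrArg (fun f => f i1) hr
    simpa [Finsupp.single_apply, h01, h01.symm] using this

lemma intCast_inj {a : ℤ} (h : (a : QOrd D) = 0) : a = 0 := by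
  have h2 : (a : QOrd D) + ((0:ℤ) : QOrd D) * AdjoinRoot.root (discPoly D) = 0 := by
    push_cast; simpa using h
  exact (linIndep h2).1

end HAux

namespace HAux

section QuotFacts

variable {D : ℤ} {η : Ideal (QOrd D)} {N : ℕ}

lemma addOrd_one (hN : 0 < N) (hcyc : IsAddCyclic (QOrd D ⧸ η))
    (hcard : Nat.card (QOrd D ⧸ η) = N) : addOrderOf (1 : QOrd D ⧸ η) = N := by
  haveI : Finite (QOrd D ⧸ η) := Nat.finite_of_card_ne_zero (by omega)
  have hm : addOrderOf (1 : QOrd D ⧸ η) ∣ N := hcard ▸ addOrderOf_dvd_natCard _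
  have hall : ∀ g : QOrd D ⧸ η, addOrderOf (1 : QOrd D ⧸ η) • g = 0 := by
    intro g
    have h1 : ((addOrderOf (1 : QOrd D ⧸ η) : ℕ) : QOrd D ⧸ η) = 0 := by
      have := addOrderOf_nsmul_eq_zero (1 : QOrd D ⧸ η)
      simpa [nsmul_eq_mul] using this
    rw [nsmul_eq_mul, h1, zero_mul]
  have hexp : AddMonoid.exponent (QOrd D ⧸ η) ∣ addOrderOf (1 : QOrd D ⧸ η) :=
    AddMonoid.exponent_dvd_of_forall_nsmul_eq_zero hall
  rw [IsAddCyclic.exponent_eq_card, hcard] at hexp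
  exact Nat.dvd_antisymm hm hexp

lemma cast_surj (hN : 0 < N) (hcyc : IsAddCyclic (QOrd D ⧸ η))
    (hcard : Nat.card (QOrd D ⧸ η) = N) :
    ∀ x : QOrd D ⧸ η, ∃ n : ℤ, (n : QOrd D ⧸ η) = x := by
  haveI : Finite (QOrd D ⧸ η) := Nat.finite_of_card_ne_zero (by omega)
  intro x
  have htop : AddSubgroup.zmultiples (1 : QOrd D ⧸ η) = ⊤ := by
    apply AddSubgroup.eq_top_of_card_eq
    rw [Nat.card_zmultiples, addOrd_one hN hcyc hcard, hcard]
  have hx : x ∈ AddSubgroup.zmultiples (1 : QOrd D ⧸ η) := htop ▸ AddSubgroup.mem_top x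
  obtain ⟨n, hn⟩ := AddSubgroup.mem_zmultiples_iff.mp hx
  exact ⟨n, by simpa [zsmul_eq_mul] using hn⟩

lemma mem_int (hN : 0 < N) (hcyc : IsAddCyclic (QOrd D ⧸ η))
    (hcard : Nat.card (QOrd D ⧸ η) = N) (n : ℤ) :
    ((n : ℤ) : QOrd D) ∈ η ↔ (N : ℤ) ∣ n := by
  haveI : Finite (QOrd D ⧸ η) := Nat.finite_of_card_ne_zero (by omega)
  have h1 : ((n : ℤ) : QOrd D) ∈ η ↔ ((n : ℤ) : QOrd D ⧸ η) = 0 := by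
    rw [← Ideal.Quotient.eq_zero_iff_mem (I := η)]
    rw [show ((n : ℤ) : QOrd D ⧸ η) = Ideal.Quotient.mk η ((n:ℤ) : QOrd D) by
      rw [map_intCast]]
  rw [h1]
  have h2 : ((n : ℤ) : QOrd D ⧸ η) = n • (1 : QOrd D ⧸ η) := by
    rw [zsmul_eq_mul, mul_one]
  rw [h2, ← addOrderOf_dvd_iff_zsmul_eq_zero, addOrd_one hN hcyc hcard]

end QuotFacts
end HAux

namespace HAux

variable {D : ℤ} [IsDomain (QOrd D)]

lemma idealClassOf_mul {I J : Ideal (QOrd D)}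
    (hI : IsUnit (I : FractionalIdeal (nonZeroDivisors (QOrd D)) (FractionRing (QOrd D))))
    (hJ : IsUnit (J : FractionalIdeal (nonZeroDivisors (QOrd D)) (FractionRing (QOrd D)))) :
    idealClassOf (I * J) = idealClassOf I * idealClassOf J := by
  have hIJ : IsUnit ((I * J : Ideal (QOrd D)) :
      FractionalIdeal (nonZeroDivisors (QOrd D)) (FractionRing (QOrd D))) := by
    rw [FractionalIdeal.coeIdeal_mul]; exact hI.mul hJ
  unfold idealClassOf
  rw [dif_pos hIJ, dif_pos hI, dif_pos hJ, ← map_mul]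
  congr 1
  apply Units.ext
  simp [IsUnit.unit_spec, FractionalIdeal.coeIdeal_mul]

lemma idealClassOf_span_singleton {x : QOrd D} (hx : x ≠ 0) :
    idealClassOf (Ideal.span {x}) = 1 := by
  set y := algebraMap (QOrd D) (FractionRing (QOrd D)) x with hy
  have hy0 : y ≠ 0 := by
    simpa [hy] using (map_ne_zero_iff _ (IsFractionRing.injective (QOrd D) (FractionRing (QOrd D)))).mpr hx
  have hcoe : ((Ideal.span {x} : Ideal (QOrd D)) :
      FractionalIdeal (nonZeroDivisors (QOrd D)) (FractionRing (QOrd D)))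
      = FractionalIdeal.spanSingleton _ y :=
    FractionalIdeal.coeIdeal_span_singleton x
  have hunit : IsUnit ((Ideal.span {x} : Ideal (QOrd D)) :
      FractionalIdeal (nonZeroDivisors (QOrd D)) (FractionRing (QOrd D))) := by
    rw [hcoe]
    refine IsUnit.of_mul_eq_one (FractionalIdeal.spanSingleton _ y⁻¹) ?_
    rw [FractionalIdeal.spanSingleton_mul_spanSingleton, mul_inv_cancel₀ hy0,
      FractionalIdeal.spanSingleton_one]
  unfold idealClassOf
  rw [dif_pos hunit, ClassGroup.mk_eq_one_iff]
  refine ⟨⟨y, ?_⟩⟩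
  rw [IsUnit.unit_spec, hcoe]
  exact FractionalIdeal.coe_spanSingleton (nonZeroDivisors (QOrd D)) y

end HAux

namespace HAux

set_option maxHeartbeats 1000000 in
lemma key {D : ℤ} [IsDomain (QOrd D)]
    (conj : QOrd D ≃+* QOrd D)
    (hconj : conj (AdjoinRoot.root (discPoly D)) =
      ((sD D : ℤ) : QOrd D) - AdjoinRoot.root (discPoly D))
    {N : ℕ} (hN : 0 < N) {η : Ideal (QOrd D)}
    (hηinv : IsUnit (η : FractionalIdeal (nonZeroDivisors (QOrd D)) (FractionRing (QOrd D))))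
    (hηcyc : IsAddCyclic ((QOrd D) ⧸ η)) (hηcard : Nat.card ((QOrd D) ⧸ η) = N)
    {Q : ℕ} (hHall : HallDvd Q N)
    (heq : Ideal.map (conj : QOrd D →+* QOrd D) (etaPart η Q) * etaPart η (N / Q) = η) :
    (idealClassOf (etaPart η Q))^2 = 1 := by
  set w := AdjoinRoot.root (discPoly D) with hw
  obtain ⟨hQdvd, hQcop⟩ := hHall
  have hQN : Q * (N / Q) = N := Nat.mul_div_cancel' hQdvd
  have hQpos : 0 < Q := Nat.pos_of_dvd_of_pos hQdvd hN
  have hNQdvd : (N / Q) ∣ N := Nat.div_dvd_of_dvd hQdvd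
  have hNη : ((N : ℕ) : QOrd D) ∈ η := by
    have := (mem_int hN hηcyc hηcard (N : ℤ)).mpr dvd_rfl
    simpa using this
  obtain ⟨t, ht⟩ : ∃ t : ℤ, w - (t : QOrd D) ∈ η := by
    obtain ⟨n, hn⟩ := cast_surj hN hηcyc hηcard (Ideal.Quotient.mk η w)
    refine ⟨n, ?_⟩
    rw [← Ideal.Quotient.eq_zero_iff_mem, map_sub, map_intCast, hn, sub_self]
  -- N divides f(t)
  have hfeval : (N : ℤ) ∣ (discPoly D).eval t := by
    set F := (discPoly D).map (AdjoinRoot.of (discPoly D)) with hF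
    have h1 : F.eval ((t : ℤ) : QOrd D) = (((discPoly D).eval t : ℤ) : QOrd D) := by
      rw [hF, eval_map, ← of_intCast (D := D) t, eval₂_at_apply, of_intCast]
    have h2 : F.eval w = 0 := by rw [hF, eval_map]; exact AdjoinRoot.eval₂_root _
    have h3 : ((t : QOrd D) - w) ∣ (((discPoly D).eval t : ℤ) : QOrd D) := by
      have h4 := sub_dvd_eval_sub ((t : ℤ) : QOrd D) w F
      rw [h1, h2, sub_zero] at h4; exact h4
    obtain ⟨c, hc⟩ := h3
    have h4 : (((discPoly D).eval t : ℤ) : QOrd D) ∈ η := by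
      rw [hc]
      refine Ideal.mul_mem_right _ _ ?_
      have := η.neg_mem ht
      simpa using this
    exact (mem_int hN hηcyc hηcard _).mp h4
  -- explicit form of etaPart
  have hspan : ∀ Q' : ℕ, Q' ∣ N →
      etaPart η Q' = Ideal.span {((Q' : ℕ) : QOrd D), w - (t : QOrd D)} := by
    intro Q' hQ'
    apply le_antisymm
    · refine sup_le ?_ ?_
      · intro x hx
        obtain ⟨a, b, rfl⟩ := coords (D := D) x
        have h5 : ((a + b * t : ℤ) : QOrd D) ∈ η := by
          have heqx : ((a + b * t : ℤ) : QOrd D)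
              = ((a : ℤ) : QOrd D) + ((b : ℤ) : QOrd D) * w
                - ((b : ℤ) : QOrd D) * (w - (t : QOrd D)) := by
            push_cast; ring
          rw [heqx]
          exact sub_mem hx (Ideal.mul_mem_left _ _ ht)
        obtain ⟨e, he⟩ := (mem_int hN hηcyc hηcard _).mp h5
        have h8 : ((Q' : ℕ) : QOrd D) * (((N / Q' : ℕ)) : QOrd D) = ((N : ℕ) : QOrd D) := by
          exact_mod_cast congrArg (Nat.cast : ℕ → QOrd D) (Nat.mul_div_cancel' hQ')
        have h7 : ((a : ℤ) : QOrd D) + ((b : ℤ) : QOrd D) * w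
            = ((Q' : ℕ) : QOrd D) * ((((N / Q' : ℕ)) : QOrd D) * ((e : ℤ) : QOrd D))
              + ((b : ℤ) : QOrd D) * (w - (t : QOrd D)) := by
          have h6 := congrArg (fun z : ℤ => (z : QOrd D)) he
          push_cast at h6 ⊢
          linear_combination h6 - ((e : ℤ) : QOrd D) * h8
        rw [h7]
        exact add_mem (Ideal.mul_mem_right _ _ (Ideal.subset_span (by simp)))
          (Ideal.mul_mem_left _ _ (Ideal.subset_span (by simp)))
      · exact Ideal.span_mono (Set.singleton_subset_iff.mpr (by simp))
    · rw [Ideal.span_le]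
      rintro x hx
      simp only [Set.mem_insert_iff, Set.mem_singleton_iff] at hx
      rcases hx with rfl | rfl
      · exact Ideal.mem_sup_right (Ideal.subset_span rfl)
      · exact Ideal.mem_sup_left ht
  have hEQ := hspan Q hQdvd
  -- product law
  have hprod : etaPart η Q * etaPart η (N / Q) = η := by
    apply le_antisymm
    · rw [Ideal.mul_le]
      intro r hr s hs
      rcases Submodule.mem_sup.mp hr with ⟨r1, hr1, r2, hr2, rfl⟩
      rcases Submodule.mem_sup.mp hs with ⟨s1, hs1, s2, hs2, rfl⟩
      have hsplit : (r1 + r2) * (s1 + s2) = r1 * (s1 + s2) + s1 * r2 + r2 * s2 := by ring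
      rw [hsplit]
      refine add_mem (add_mem (Ideal.mul_mem_right _ _ hr1) (Ideal.mul_mem_right _ _ hs1)) ?_
      obtain ⟨u, rfl⟩ := Ideal.mem_span_singleton.mp hr2
      obtain ⟨v, rfl⟩ := Ideal.mem_span_singleton.mp hs2
      have h8 : ((Q : ℕ) : QOrd D) * ((N / Q : ℕ) : QOrd D) = ((N : ℕ) : QOrd D) := by
        exact_mod_cast congrArg (Nat.cast : ℕ → QOrd D) hQN
      have hc : ((Q : QOrd D) * u) * ((((N / Q) : ℕ) : QOrd D) * v)
          = ((N : ℕ) : QOrd D) * (u * v) := by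
        linear_combination (u * v) * h8
      rw [hc]
      exact Ideal.mul_mem_right _ _ hNη
    · intro x hx
      obtain ⟨u, v, huv⟩ : IsCoprime ((Q : ℕ) : ℤ) (((N / Q : ℕ)) : ℤ) :=
        Nat.isCoprime_iff_coprime.mpr hQcop
      have hxeq : x = (u : QOrd D) * (((Q : ℕ) : QOrd D) * x)
          + (v : QOrd D) * (x * ((N / Q : ℕ) : QOrd D)) := by
        have h9 := congrArg (fun z : ℤ => (z : QOrd D)) huv
        simp only [Int.cast_add, Int.cast_mul, Int.cast_natCast, Int.cast_one] at h9
        linear_combination (-x) * h9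
      rw [hxeq]
      refine add_mem (Ideal.mul_mem_left _ _ ?_) (Ideal.mul_mem_left _ _ ?_)
      · exact Ideal.mul_mem_mul (Ideal.mem_sup_right (Ideal.subset_span rfl))
          (Ideal.mem_sup_left hx)
      · exact Ideal.mul_mem_mul (Ideal.mem_sup_left hx)
          (Ideal.mem_sup_right (Ideal.subset_span rfl))
  -- invertibility
  have hcoeprod : ((etaPart η Q : Ideal (QOrd D)) :
        FractionalIdeal (nonZeroDivisors (QOrd D)) (FractionRing (QOrd D)))
      * ((etaPart η (N / Q) : Ideal (QOrd D)) :
        FractionalIdeal (nonZeroDivisors (QOrd D)) (FractionRing (QOrd D)))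
      = (η : FractionalIdeal (nonZeroDivisors (QOrd D)) (FractionRing (QOrd D))) := by
    rw [← FractionalIdeal.coeIdeal_mul, hprod]
  have huQ : IsUnit ((etaPart η Q : Ideal (QOrd D)) :
      FractionalIdeal (nonZeroDivisors (QOrd D)) (FractionRing (QOrd D))) :=
    isUnit_of_mul_isUnit_left (hcoeprod ▸ hηinv)
  have huNQ : IsUnit ((etaPart η (N / Q) : Ideal (QOrd D)) :
      FractionalIdeal (nonZeroDivisors (QOrd D)) (FractionRing (QOrd D))) :=
    isUnit_of_mul_isUnit_right (hcoeprod ▸ hηinv)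
  -- conj stability
  have hconjId : Ideal.map (conj : QOrd D →+* QOrd D) (etaPart η Q) = etaPart η Q := by
    apply FractionalIdeal.coeIdeal_injective (K := FractionRing (QOrd D))
    have e1 : ((Ideal.map (conj : QOrd D →+* QOrd D) (etaPart η Q) : Ideal (QOrd D)) :
          FractionalIdeal (nonZeroDivisors (QOrd D)) (FractionRing (QOrd D)))
        * ((etaPart η (N / Q) : Ideal (QOrd D)) :
          FractionalIdeal (nonZeroDivisors (QOrd D)) (FractionRing (QOrd D)))
        = ((etaPart η Q : Ideal (QOrd D)) :
          FractionalIdeal (nonZeroDivisors (QOrd D)) (FractionRing (QOrd D)))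
        * ((etaPart η (N / Q) : Ideal (QOrd D)) :
          FractionalIdeal (nonZeroDivisors (QOrd D)) (FractionRing (QOrd D))) := by
      rw [← FractionalIdeal.coeIdeal_mul, ← FractionalIdeal.coeIdeal_mul, heq, hprod]
    exact huNQ.mul_right_cancel e1
  have hconjspan : Ideal.map (conj : QOrd D →+* QOrd D)
        (Ideal.span {((Q : ℕ) : QOrd D), w - (t : QOrd D)})
      = Ideal.span {((Q : ℕ) : QOrd D), ((sD D : ℤ) : QOrd D) - (t : QOrd D) - w} := by
    rw [Ideal.map_span, Set.image_pair, map_natCast, map_sub, map_intCast,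
      show ((conj : QOrd D →+* QOrd D) w) = conj w from rfl, hconj]
    have h10 : ((sD D : ℤ) : QOrd D) - w - (t : QOrd D)
        = ((sD D : ℤ) : QOrd D) - (t : QOrd D) - w := by ring
    rw [h10]
  have hmem1 : ((sD D : ℤ) : QOrd D) - (t : QOrd D) - w
      ∈ Ideal.span {((Q : ℕ) : QOrd D), w - (t : QOrd D)} := by
    have h11 : Ideal.span {((Q : ℕ) : QOrd D), ((sD D : ℤ) : QOrd D) - (t : QOrd D) - w}
        = Ideal.span {((Q : ℕ) : QOrd D), w - (t : QOrd D)} := by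
      rw [← hconjspan, ← hEQ, hconjId, hEQ]
    rw [← h11]
    exact Ideal.subset_span (by simp)
  have hmem2 : ((sD D - 2 * t : ℤ) : QOrd D)
      ∈ Ideal.span {((Q : ℕ) : QOrd D), w - (t : QOrd D)} := by
    have heq2 : ((sD D - 2 * t : ℤ) : QOrd D)
        = (((sD D : ℤ) : QOrd D) - (t : QOrd D) - w) + (w - (t : QOrd D)) := by
      push_cast; ring
    rw [heq2]
    exact add_mem hmem1 (Ideal.subset_span (by simp))
  -- the homomorphism to ZMod Q
  have hroot0 : eval₂ (Int.castRingHom (ZMod Q)) ((t : ℤ) : ZMod Q) (discPoly D) = 0 := by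
    have h12 : ((t : ℤ) : ZMod Q) = (Int.castRingHom (ZMod Q)) t := rfl
    rw [h12, eval₂_at_apply]
    obtain ⟨e', he'⟩ := hfeval
    rw [show (Int.castRingHom (ZMod Q)) ((discPoly D).eval t)
        = (((discPoly D).eval t : ℤ) : ZMod Q) from rfl, he']
    push_cast
    have h0 : ((N : ℕ) : ZMod Q) = 0 := (ZMod.natCast_eq_zero_iff N Q).mpr hQdvd
    rw [h0, zero_mul]
  have hs2t : ((Q : ℕ) : ℤ) ∣ (sD D - 2 * t) := by
    set ψ := AdjoinRoot.lift (Int.castRingHom (ZMod Q)) ((t : ℤ) : ZMod Q) hroot0 with hψdef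
    have hker : Ideal.span {((Q : ℕ) : QOrd D), w - (t : QOrd D)} ≤ RingHom.ker ψ := by
      rw [Ideal.span_le]
      rintro y hy
      simp only [Set.mem_insert_iff, Set.mem_singleton_iff] at hy
      rcases hy with rfl | rfl
      · simp [RingHom.mem_ker, map_natCast]
      · simp only [SetLike.mem_coe, RingHom.mem_ker, map_sub, map_intCast, hψdef]
        rw [hw, AdjoinRoot.lift_root, sub_self]
    have h13 := hker hmem2
    rw [RingHom.mem_ker, map_intCast] at h13
    exact_mod_cast (ZMod.intCast_zmod_eq_zero_iff_dvd _ Q).mp h13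
  -- m and the key quadratic identity
  have hQe : ((Q : ℕ) : ℤ) ∣ (discPoly D).eval t :=
    dvd_trans (Int.natCast_dvd_natCast.mpr hQdvd) hfeval
  set m : ℤ := (discPoly D).eval t / ((Q : ℕ) : ℤ) with hmdef
  have hm : ((Q : ℕ) : ℤ) * m = (discPoly D).eval t := Int.mul_ediv_cancel' hQe
  have heval : (discPoly D).eval t = t ^ 2 - sD D * t + cD D := by
    rw [discPoly_eq]; simp; ring
  have hu2 : (w - (t : QOrd D)) * (w - (t : QOrd D))
      = ((sD D - 2 * t : ℤ) : QOrd D) * (w - (t : QOrd D))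
        - (((discPoly D).eval t : ℤ) : QOrd D) := by
    rw [heval]
    push_cast
    linear_combination root_sq (D := D)
  obtain ⟨k, hk⟩ := hs2t
  have hkO : ((sD D : ℤ) : QOrd D) - 2 * (t : QOrd D)
      = ((Q : ℕ) : QOrd D) * ((k : ℤ) : QOrd D) := by
    have := congrArg (fun z : ℤ => (z : QOrd D)) hk
    push_cast at this ⊢
    linear_combination this
  have hmO : ((Q : ℕ) : QOrd D) * ((m : ℤ) : QOrd D)
      = (((discPoly D).eval t : ℤ) : QOrd D) := by
    have := congrArg (fun z : ℤ => (z : QOrd D)) hm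
    push_cast at this ⊢
    linear_combination this
  have huu : (w - (t : QOrd D)) * (w - (t : QOrd D))
      = ((Q : ℕ) : QOrd D) * (((k : ℤ) : QOrd D) * (w - (t : QOrd D)) - ((m : ℤ) : QOrd D)) := by
    rw [hu2]
    push_cast at hkO hmO ⊢
    linear_combination (w - (t : QOrd D)) * hkO + hmO
  set J : Ideal (QOrd D) :=
    Ideal.span {((Q : ℕ) : QOrd D), w - (t : QOrd D), ((m : ℤ) : QOrd D)} with hJdef
  have hQJ : (((Q : ℕ) : QOrd D)) ∈ J := Ideal.subset_span (by simp)
  have huJ : (w - (t : QOrd D)) ∈ J := Ideal.subset_span (by simp)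
  have hmJ : (((m : ℤ) : QOrd D)) ∈ J := Ideal.subset_span (by simp)
  -- the square identity
  have hsq : Ideal.span {((Q : ℕ) : QOrd D), w - (t : QOrd D)}
        * Ideal.span {((Q : ℕ) : QOrd D), w - (t : QOrd D)}
      = Ideal.span {((Q : ℕ) : QOrd D)} * J := by
    apply le_antisymm
    · rw [Ideal.mul_le]
      intro r hr s hs
      obtain ⟨r1, r2, rfl⟩ := Ideal.mem_span_pair.mp hr
      obtain ⟨s1, s2, rfl⟩ := Ideal.mem_span_pair.mp hs
      have hCmem : r1 * s1 * ((Q : ℕ) : QOrd D)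
          + (r1 * s2 + r2 * s1) * (w - (t : QOrd D))
          + r2 * s2 * (((k : ℤ) : QOrd D) * (w - (t : QOrd D)) - ((m : ℤ) : QOrd D)) ∈ J := by
        refine add_mem (add_mem (Ideal.mul_mem_left _ _ hQJ) (Ideal.mul_mem_left _ _ huJ)) ?_
        exact Ideal.mul_mem_left _ _ (sub_mem (Ideal.mul_mem_left _ _ huJ) hmJ)
      have hprodeq : (r1 * ((Q : ℕ) : QOrd D) + r2 * (w - (t : QOrd D)))
            * (s1 * ((Q : ℕ) : QOrd D) + s2 * (w - (t : QOrd D)))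
          = ((Q : ℕ) : QOrd D) * (r1 * s1 * ((Q : ℕ) : QOrd D)
            + (r1 * s2 + r2 * s1) * (w - (t : QOrd D))
            + r2 * s2 * (((k : ℤ) : QOrd D) * (w - (t : QOrd D)) - ((m : ℤ) : QOrd D))) := by
        linear_combination (r2 * s2) * huu
      rw [hprodeq]
      exact Ideal.mul_mem_mul (Ideal.subset_span rfl) hCmem
    · have hQm : ((Q : ℕ) : QOrd D) * ((m : ℤ) : QOrd D)
          ∈ Ideal.span {((Q : ℕ) : QOrd D), w - (t : QOrd D)}
            * Ideal.span {((Q : ℕ) : QOrd D), w - (t : QOrd D)} := by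
        have heq3 : ((Q : ℕ) : QOrd D) * ((m : ℤ) : QOrd D)
            = ((k : ℤ) : QOrd D) * (((Q : ℕ) : QOrd D) * (w - (t : QOrd D)))
              - (w - (t : QOrd D)) * (w - (t : QOrd D)) := by
          linear_combination huu
        rw [heq3]
        refine sub_mem (Ideal.mul_mem_left _ _ ?_) ?_
        · exact Ideal.mul_mem_mul (Ideal.subset_span (by simp)) (Ideal.subset_span (by simp))
        · exact Ideal.mul_mem_mul (Ideal.subset_span (by simp)) (Ideal.subset_span (by simp))
      have hJsplit : J = Ideal.span {((Q : ℕ) : QOrd D)}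
          ⊔ (Ideal.span {w - (t : QOrd D)} ⊔ Ideal.span {((m : ℤ) : QOrd D)}) := by
        rw [hJdef, Ideal.span_insert, Ideal.span_insert]
      rw [hJsplit, Ideal.mul_sup, Ideal.mul_sup]
      refine sup_le ?_ (sup_le ?_ ?_)
      · exact Ideal.mul_mono (Ideal.span_mono (by simp)) (Ideal.span_mono (by simp))
      · exact Ideal.mul_mono (Ideal.span_mono (by simp)) (Ideal.span_mono (by simp))
      · rw [Ideal.span_singleton_mul_span_singleton, Ideal.span_le]
        exact Set.singleton_subset_iff.mpr hQm
  have hJunit : IsUnit ((J : Ideal (QOrd D)) :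
      FractionalIdeal (nonZeroDivisors (QOrd D)) (FractionRing (QOrd D))) := by
    have e4 : ((etaPart η Q : Ideal (QOrd D)) :
          FractionalIdeal (nonZeroDivisors (QOrd D)) (FractionRing (QOrd D)))
        * ((etaPart η Q : Ideal (QOrd D)) :
          FractionalIdeal (nonZeroDivisors (QOrd D)) (FractionRing (QOrd D)))
        = ((Ideal.span {((Q : ℕ) : QOrd D)} : Ideal (QOrd D)) :
          FractionalIdeal (nonZeroDivisors (QOrd D)) (FractionRing (QOrd D)))
        * ((J : Ideal (QOrd D)) :
          FractionalIdeal (nonZeroDivisors (QOrd D)) (FractionRing (QOrd D))) := by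
      rw [← FractionalIdeal.coeIdeal_mul, ← FractionalIdeal.coeIdeal_mul, hEQ, hsq]
    exact isUnit_of_mul_isUnit_right (e4 ▸ huQ.mul huQ)
  have hJtop : J = ⊤ := by
    by_cases hg : Int.gcd ((Q : ℕ) : ℤ) m = 1
    · obtain ⟨x, y, hxy⟩ := Int.isCoprime_iff_gcd_eq_one.mpr hg
      rw [Ideal.eq_top_iff_one]
      have h14 : (1 : QOrd D) = (x : QOrd D) * ((Q : ℕ) : QOrd D)
          + (y : QOrd D) * ((m : ℤ) : QOrd D) := by
        have := congrArg (fun z : ℤ => (z : QOrd D)) hxy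
        push_cast at this
        linear_combination -this
      rw [h14]
      exact add_mem (Ideal.mul_mem_left _ _ hQJ) (Ideal.mul_mem_left _ _ hmJ)
    · exfalso
      set p : ℕ := (Int.gcd ((Q : ℕ) : ℤ) m).minFac with hpdef
      have hp : p.Prime := Nat.minFac_prime hg
      have hpg : (p : ℤ) ∣ (Int.gcd ((Q : ℕ) : ℤ) m : ℤ) :=
        Int.natCast_dvd_natCast.mpr (Nat.minFac_dvd _)
      have hpQ : (p : ℤ) ∣ ((Q : ℕ) : ℤ) := hpg.trans (Int.gcd_dvd_left _ _)
      have hpm : (p : ℤ) ∣ m := hpg.trans (Int.gcd_dvd_right _ _)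
      have hps : (p : ℤ) ∣ (sD D - 2 * t) := hpQ.trans ⟨k, hk⟩
      obtain ⟨q', hq'⟩ := hpQ
      obtain ⟨m', hm'⟩ := hpm
      obtain ⟨k', hk'⟩ := hps
      have hq'O : ((Q : ℕ) : QOrd D) = ((p : ℕ) : QOrd D) * ((q' : ℤ) : QOrd D) := by
        exact_mod_cast congrArg (fun z : ℤ => (z : QOrd D)) hq'
      have hm'O : ((m : ℤ) : QOrd D) = ((p : ℕ) : QOrd D) * ((m' : ℤ) : QOrd D) := by
        exact_mod_cast congrArg (fun z : ℤ => (z : QOrd D)) hm'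
      -- J * J ≤ span {p} * J
      have hJJ : J * J ≤ Ideal.span {((p : ℕ) : QOrd D)} * J := by
        have hgen : ∀ x ∈ ({((Q : ℕ) : QOrd D), w - (t : QOrd D), ((m : ℤ) : QOrd D)} :
            Set (QOrd D)), ∀ y ∈ ({((Q : ℕ) : QOrd D), w - (t : QOrd D),
              ((m : ℤ) : QOrd D)} : Set (QOrd D)),
            x * y ∈ Ideal.span {((p : ℕ) : QOrd D)} * J := by
          intro x hx y hy
          have hmul : ∀ z, z ∈ J → ((p : ℕ) : QOrd D) * z
              ∈ Ideal.span {((p : ℕ) : QOrd D)} * J := fun z hz =>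
            Ideal.mul_mem_mul (Ideal.subset_span rfl) hz
          simp only [Set.mem_insert_iff, Set.mem_singleton_iff] at hx hy
          rcases hx with rfl | rfl | rfl <;> rcases hy with rfl | rfl | rfl
          · rw [show ((Q : ℕ) : QOrd D) * ((Q : ℕ) : QOrd D)
              = ((p : ℕ) : QOrd D) * (((q' : ℤ) : QOrd D) * ((Q : ℕ) : QOrd D)) from by
                rw [hq'O]; ring]
            exact hmul _ (Ideal.mul_mem_left _ _ hQJ)
          · rw [show ((Q : ℕ) : QOrd D) * (w - (t : QOrd D))
              = ((p : ℕ) : QOrd D) * (((q' : ℤ) : QOrd D) * (w - (t : QOrd D))) from by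
                rw [hq'O]; ring]
            exact hmul _ (Ideal.mul_mem_left _ _ huJ)
          · rw [show ((Q : ℕ) : QOrd D) * ((m : ℤ) : QOrd D)
              = ((p : ℕ) : QOrd D) * (((q' : ℤ) : QOrd D) * ((m : ℤ) : QOrd D)) from by
                rw [hq'O]; ring]
            exact hmul _ (Ideal.mul_mem_left _ _ hmJ)
          · rw [show (w - (t : QOrd D)) * ((Q : ℕ) : QOrd D)
              = ((p : ℕ) : QOrd D) * (((q' : ℤ) : QOrd D) * (w - (t : QOrd D))) from by
                rw [hq'O]; ring]
            exact hmul _ (Ideal.mul_mem_left _ _ huJ)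
          · -- u * u
            have h15 : (w - (t : QOrd D)) * (w - (t : QOrd D))
                = ((p : ℕ) : QOrd D) * (((k' : ℤ) : QOrd D) * (w - (t : QOrd D))
                  - ((q' : ℤ) : QOrd D) * ((m : ℤ) : QOrd D)) := by
              have hk'O := congrArg (fun z : ℤ => (z : QOrd D)) hk'
              push_cast at hk'O
              rw [hu2, ← hmO, hq'O]
              push_cast
              linear_combination (w - (t : QOrd D)) * hk'O
            rw [h15]
            exact hmul _ (sub_mem (Ideal.mul_mem_left _ _ huJ) (Ideal.mul_mem_left _ _ hmJ))
          · rw [show (w - (t : QOrd D)) * ((m : ℤ) : QOrd D)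
              = ((p : ℕ) : QOrd D) * (((m' : ℤ) : QOrd D) * (w - (t : QOrd D))) from by
                rw [hm'O]; ring]
            exact hmul _ (Ideal.mul_mem_left _ _ huJ)
          · rw [show ((m : ℤ) : QOrd D) * ((Q : ℕ) : QOrd D)
              = ((p : ℕ) : QOrd D) * (((q' : ℤ) : QOrd D) * ((m : ℤ) : QOrd D)) from by
                rw [hq'O]; ring]
            exact hmul _ (Ideal.mul_mem_left _ _ hmJ)
          · rw [show ((m : ℤ) : QOrd D) * (w - (t : QOrd D))
              = ((p : ℕ) : QOrd D) * (((m' : ℤ) : QOrd D) * (w - (t : QOrd D))) from by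
                rw [hm'O]; ring]
            exact hmul _ (Ideal.mul_mem_left _ _ huJ)
          · rw [show ((m : ℤ) : QOrd D) * ((m : ℤ) : QOrd D)
              = ((p : ℕ) : QOrd D) * (((m' : ℤ) : QOrd D) * ((m : ℤ) : QOrd D)) from by
                rw [hm'O]; ring]
            exact hmul _ (Ideal.mul_mem_left _ _ hmJ)
        rw [hJdef, Ideal.span_mul_span, Ideal.span_le]
        intro x hx
        rw [Set.mem_mul] at hx
        obtain ⟨x1, hx1, x2, hx2, rfl⟩ := hx
        exact hgen x1 hx1 x2 hx2
      -- cancel J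
      have hfrac : ((J : Ideal (QOrd D)) :
            FractionalIdeal (nonZeroDivisors (QOrd D)) (FractionRing (QOrd D)))
          ≤ ((Ideal.span {((p : ℕ) : QOrd D)} : Ideal (QOrd D)) :
            FractionalIdeal (nonZeroDivisors (QOrd D)) (FractionRing (QOrd D))) := by
        set v := hJunit.unit with hvdef
        have hv : (v : FractionalIdeal (nonZeroDivisors (QOrd D)) (FractionRing (QOrd D)))
            = ((J : Ideal (QOrd D)) : FractionalIdeal (nonZeroDivisors (QOrd D))
              (FractionRing (QOrd D))) := hJunit.unit_spec
        have h16 : ((J : Ideal (QOrd D)) : FractionalIdeal (nonZeroDivisors (QOrd D))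
              (FractionRing (QOrd D)))
            * ((J : Ideal (QOrd D)) : FractionalIdeal (nonZeroDivisors (QOrd D))
              (FractionRing (QOrd D)))
            ≤ ((Ideal.span {((p : ℕ) : QOrd D)} : Ideal (QOrd D)) :
              FractionalIdeal (nonZeroDivisors (QOrd D)) (FractionRing (QOrd D)))
            * ((J : Ideal (QOrd D)) : FractionalIdeal (nonZeroDivisors (QOrd D))
              (FractionRing (QOrd D))) := by
          rw [← FractionalIdeal.coeIdeal_mul, ← FractionalIdeal.coeIdeal_mul]
          exact (FractionalIdeal.coeIdeal_le_coeIdeal _).mpr hJJ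
        have h17 := mul_le_mul_right h16
          ((v⁻¹ : (FractionalIdeal (nonZeroDivisors (QOrd D)) (FractionRing (QOrd D)))ˣ) :
            FractionalIdeal (nonZeroDivisors (QOrd D)) (FractionRing (QOrd D)))
        calc ((J : Ideal (QOrd D)) : FractionalIdeal (nonZeroDivisors (QOrd D))
              (FractionRing (QOrd D)))
            = ((v⁻¹ : (FractionalIdeal (nonZeroDivisors (QOrd D))
                (FractionRing (QOrd D)))ˣ) : FractionalIdeal (nonZeroDivisors (QOrd D))
                (FractionRing (QOrd D)))
              * (((J : Ideal (QOrd D)) : FractionalIdeal (nonZeroDivisors (QOrd D))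
                (FractionRing (QOrd D)))
                * ((J : Ideal (QOrd D)) : FractionalIdeal (nonZeroDivisors (QOrd D))
                (FractionRing (QOrd D)))) := by
              rw [← hv, ← mul_assoc, Units.inv_mul, one_mul]
          _ ≤ ((v⁻¹ : (FractionalIdeal (nonZeroDivisors (QOrd D))
                (FractionRing (QOrd D)))ˣ) : FractionalIdeal (nonZeroDivisors (QOrd D))
                (FractionRing (QOrd D)))
              * (((Ideal.span {((p : ℕ) : QOrd D)} : Ideal (QOrd D)) :
                FractionalIdeal (nonZeroDivisors (QOrd D)) (FractionRing (QOrd D)))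
                * ((J : Ideal (QOrd D)) : FractionalIdeal (nonZeroDivisors (QOrd D))
                (FractionRing (QOrd D)))) := h17
          _ = ((Ideal.span {((p : ℕ) : QOrd D)} : Ideal (QOrd D)) :
                FractionalIdeal (nonZeroDivisors (QOrd D)) (FractionRing (QOrd D))) := by
              rw [← hv, mul_comm (((Ideal.span {((p : ℕ) : QOrd D)} : Ideal (QOrd D)) :
                FractionalIdeal (nonZeroDivisors (QOrd D)) (FractionRing (QOrd D)))),
                ← mul_assoc, Units.inv_mul, one_mul]
      have hJle : J ≤ Ideal.span {((p : ℕ) : QOrd D)} :=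
        (FractionalIdeal.coeIdeal_le_coeIdeal _).mp hfrac
      obtain ⟨c, hc⟩ := Ideal.mem_span_singleton.mp (hJle huJ)
      obtain ⟨x1, x2, hx12⟩ := coords (D := D) c
      have hlin : ((-t - p * x1 : ℤ) : QOrd D) + ((1 - p * x2 : ℤ) : QOrd D) * w = 0 := by
        push_cast
        rw [hx12] at hc
        linear_combination hc
      obtain ⟨h18, h19⟩ := linIndep hlin
      have h20 : (1 : ℤ) = (p : ℤ) * x2 := by linarith
      have h21 : (p : ℤ) ∣ 1 := Dvd.intro _ h20.symm
      have h22 := Int.le_of_dvd one_pos h21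
      have := hp.two_le
      omega
  -- conclude
  have hsq2 : etaPart η Q * etaPart η Q = Ideal.span {((Q : ℕ) : QOrd D)} := by
    rw [hEQ, hsq, hJtop, Ideal.mul_top]
  have hQne : ((Q : ℕ) : QOrd D) ≠ 0 := by
    intro h0
    have h23 : ((Q : ℤ) : QOrd D) = 0 := by exact_mod_cast h0
    have := intCast_inj h23
    omega
  calc (idealClassOf (etaPart η Q)) ^ 2
      = idealClassOf (etaPart η Q) * idealClassOf (etaPart η Q) := sq _
    _ = idealClassOf (etaPart η Q * etaPart η Q) := (idealClassOf_mul huQ huQ).symm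
    _ = idealClassOf (Ideal.span {((Q : ℕ) : QOrd D)}) := by rw [hsq2]
    _ = 1 := idealClassOf_span_singleton hQne

end HAux

namespace HAux

lemma hall_factorization {N Q : ℕ} (hN : 0 < N) (h : HallDvd Q N) {p : ℕ}
    (hp : p ∈ Q.primeFactors) : Q.factorization p = N.factorization p := by
  obtain ⟨hd, hc⟩ := h
  have hN0 : N ≠ 0 := by omega
  have hQ0 : Q ≠ 0 := by
    rintro rfl
    simp at hp
  have hNQ0 : N / Q ≠ 0 := by
    intro h0
    rw [← Nat.mul_div_cancel' hd, h0, mul_zero] at hN0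
    exact hN0 rfl
  have hpp : p.Prime := Nat.prime_of_mem_primeFactors hp
  have hpQ : p ∣ Q := Nat.dvd_of_mem_primeFactors hp
  have hnd : ¬ p ∣ (N / Q) := by
    intro hdvd
    have : p ∣ Nat.gcd Q (N / Q) := Nat.dvd_gcd hpQ hdvd
    rw [hc] at this
    exact absurd (Nat.eq_one_of_dvd_one this) hpp.ne_one
  have hmul : N = Q * (N / Q) := (Nat.mul_div_cancel' hd).symm
  rw [hmul, Nat.factorization_mul hQ0 hNQ0]
  simp [Nat.factorization_eq_zero_of_not_dvd hnd]

lemma hall_eq {N Q Q' : ℕ} (hN : 0 < N) (h : HallDvd Q N) (h' : HallDvd Q' N)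
    (hpf : Q.primeFactors = Q'.primeFactors) : Q = Q' := by
  have hQ0 : Q ≠ 0 := by
    have := Nat.pos_of_dvd_of_pos h.1 hN; omega
  have hQ'0 : Q' ≠ 0 := by
    have := Nat.pos_of_dvd_of_pos h'.1 hN; omega
  apply Nat.factorization_inj (Set.mem_setOf.mpr hQ0) (Set.mem_setOf.mpr hQ'0)
  ext p
  by_cases hp : p ∈ Q.primeFactors
  · rw [hall_factorization hN h hp, hall_factorization hN h' (hpf ▸ hp)]
  · have hp' : p ∉ Q'.primeFactors := hpf ▸ hp
    rw [← Nat.support_factorization] at hp hp'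
    rw [Finsupp.notMem_support_iff.mp hp, Finsupp.notMem_support_iff.mp hp']

end HAux


/-- Suppose the Heegner point `(𝒪, η, [𝔞])` of level `N` (with `𝒪` the
imaginary quadratic order of discriminant `D`, `η` an invertible ideal with `𝒪/η ≅ ℤ/N`
cyclic, `[𝔞] ∈ Pic(𝒪)`) maps to a rational point of `X₀(N)* = X₀(N)/𝒲(N)`, i.e. the
Galois orbit of the triple (computed via the explicit formulas: `σ(𝔟)` sends
`(η, [𝔞]) ↦ (η, [𝔞𝔟⁻¹])` and `τσ(𝔟)` sends `(η, [𝔞]) ↦ (η̄, [𝔞⁻¹𝔟⁻¹])`) is contained in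
its Atkin–Lehner orbit (`w_Q(η, [𝔞]) = (η̄_Q·η_{N/Q}, [𝔞·η_Q⁻¹])` for Hall divisors
`Q ∥ N`).  Then `Pic(𝒪)` is an elementary abelian 2-group of order dividing `2^{ω(N)}`. -/
theorem pic_two_torsion_of_rational_heegner_point
    (D : ℤ) (hD : D < 0) (hD4 : D % 4 = 0 ∨ D % 4 = 1)
    [IsDomain (QOrd D)]
    (conj : QOrd D ≃+* QOrd D)
    (hconj : conj (AdjoinRoot.root (discPoly D)) =
      algebraMap ℤ (QOrd D) (if 4 ∣ D then 0 else 1) - AdjoinRoot.root (discPoly D))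
    (N : ℕ) (hN : 0 < N)
    (η : Ideal (QOrd D))
    (hηinv : IsUnit (η : FractionalIdeal (nonZeroDivisors (QOrd D)) (FractionRing (QOrd D))))
    (hηcyc : IsAddCyclic ((QOrd D) ⧸ η)) (hηcard : Nat.card ((QOrd D) ⧸ η) = N)
    (a : ClassGroup (QOrd D))
    (hrat : ∀ b : ClassGroup (QOrd D),
      (∃ Q : ℕ, HallDvd Q N ∧
        Ideal.map (conj : QOrd D →+* QOrd D) (etaPart η Q) * etaPart η (N / Q) = η ∧
        a * b⁻¹ = a * (idealClassOf (etaPart η Q))⁻¹) ∧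
      (∃ Q : ℕ, HallDvd Q N ∧
        Ideal.map (conj : QOrd D →+* QOrd D) (etaPart η Q) * etaPart η (N / Q) =
          Ideal.map (conj : QOrd D →+* QOrd D) η ∧
        a⁻¹ * b⁻¹ = a * (idealClassOf (etaPart η Q))⁻¹)) :
    (∀ x : ClassGroup (QOrd D), x ^ 2 = 1) ∧
      Nat.card (ClassGroup (QOrd D)) ∣ 2 ^ N.primeFactors.card := by
  have hconj' : conj (AdjoinRoot.root (discPoly D)) =
      ((HAux.sD D : ℤ) : QOrd D) - AdjoinRoot.root (discPoly D) := by
    rw [hconj, eq_intCast]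
    rfl
  have hb : ∀ b : ClassGroup (QOrd D), ∃ Q : ℕ, HallDvd Q N ∧
      b = idealClassOf (etaPart η Q) ∧ b ^ 2 = 1 := by
    intro b
    obtain ⟨Q, hHall, heqQ, hcls⟩ := (hrat b).1
    have hbeq : b = idealClassOf (etaPart η Q) := by
      have h1 := mul_left_cancel hcls
      exact inv_injective h1
    have hsq := HAux.key conj hconj' hN hηinv hηcyc hηcard hHall heqQ
    exact ⟨Q, hHall, hbeq, by rw [hbeq]; exact hsq⟩
  have htors : ∀ x : ClassGroup (QOrd D), x ^ 2 = 1 := by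
    intro x
    obtain ⟨Q, _, _, hsq⟩ := hb x
    exact hsq
  refine ⟨htors, ?_⟩
  choose f hf1 hf2 _ using hb
  set F : ClassGroup (QOrd D) → {s // s ∈ N.primeFactors.powerset} := fun b =>
    ⟨(f b).primeFactors, by
      rw [Finset.mem_powerset]
      exact Nat.primeFactors_mono (hf1 b).1 (by omega)⟩ with hF
  have hFinj : Function.Injective F := by
    intro b b' hbb
    have hpf : (f b).primeFactors = (f b').primeFactors := by
      simpa [hF] using congrArg Subtype.val hbb
    have hfeq : f b = f b' := HAux.hall_eq hN (hf1 b) (hf1 b') hpf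
    rw [hf2 b, hf2 b', hfeq]
  haveI : Finite (ClassGroup (QOrd D)) := Finite.of_injective F hFinj
  have hcard_le : Nat.card (ClassGroup (QOrd D)) ≤ 2 ^ N.primeFactors.card := by
    have h1 := Nat.card_le_card_of_injective F hFinj
    have h2 : Nat.card {s // s ∈ N.primeFactors.powerset} = 2 ^ N.primeFactors.card := by
      rw [Nat.card_eq_fintype_card, Fintype.card_coe, Finset.card_powerset]
    omega
  have hcard_pos : Nat.card (ClassGroup (QOrd D)) ≠ 0 := Nat.card_pos.ne'
  have h2pow : Nat.card (ClassGroup (QOrd D))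
      = 2 ^ (Nat.card (ClassGroup (QOrd D))).primeFactorsList.length := by
    refine Nat.eq_prime_pow_of_unique_prime_dvd hcard_pos ?_
    intro d hd hdvd
    haveI := Fintype.ofFinite (ClassGroup (QOrd D))
    rw [Nat.card_eq_fintype_card] at hdvd
    haveI : Fact d.Prime := ⟨hd⟩
    obtain ⟨x, hx⟩ := exists_prime_orderOf_dvd_card d hdvd
    have hord : orderOf x ∣ 2 := orderOf_dvd_of_pow_eq_one (htors x)
    rw [hx] at hord
    exact (Nat.prime_dvd_prime_iff_eq hd Nat.prime_two).mp hord
  rw [h2pow] at hcard_le ⊢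
  have hk : (Nat.card (ClassGroup (QOrd D))).primeFactorsList.length
      ≤ N.primeFactors.card := (Nat.pow_le_pow_iff_right (by norm_num)).mp hcard_le
  exact pow_dvd_pow 2 hk
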